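/- For any graph G with no isolated vertex and any nontrivial graph H, there exists a minimum-weight secure (1,0)-dominating function f on the lexicographic product G∘H such that for every vertex u of G, the sum of f over the copy H_u = {u}×V(H) is at most 2. -/

import Mathlib

namespace SecureW

open Finset

/-- Lexicographic product of simple graphs. -/
def lexProd {α β : Type*} (G : SimpleGraph α) (H : SimpleGraph β) :
    SimpleGraph (α × β) where
  Adj p q := G.Adj p.1 q.1 ∨ (p.1 = q.1 ∧ H.Adj p.2 q.2)
  symm := by
    constructor
    rintro p q (h | ⟨h1, h2⟩)
    · exact Or.inl h.symm
    · exact Or.inr ⟨h1.symm, h2.symm⟩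
  loopless := by
    constructor
    rintro p (h | ⟨_, h⟩)
    · exact G.irrefl h
    · exact H.irrefl h

open scoped Classical in
/-- Sum of `f` over the open neighbourhood of `v`. -/
noncomputable def nbrSum {V : Type*} [Fintype V] (G : SimpleGraph V) (f : V → ℕ) (v : V) : ℕ :=
  ∑ u ∈ Finset.univ.filter (fun u => G.Adj v u), f u

/-- `f` is a `w`-dominating function, where `w` is given as a list `(w_0, …, w_l)`. -/
def IsWDom {V : Type*} [Fintype V] (G : SimpleGraph V) (ws : List ℕ) (f : V → ℕ) : Prop :=
  (∀ v, f v < ws.length) ∧ ∀ v, ws.getD (f v) 0 ≤ nbrSum G f v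

/-- The function obtained from `f` by moving one unit of weight from `u` to `v`. -/
def move {V : Type*} [DecidableEq V] (f : V → ℕ) (u v : V) : V → ℕ :=
  fun x => if x = v then 1 else if x = u then f u - 1 else f x

open scoped Classical in
/-- `f` is a secure `w`-dominating function. -/
def IsSecureWDom {V : Type*} [Fintype V] (G : SimpleGraph V) (ws : List ℕ) (f : V → ℕ) : Prop :=
  IsWDom G ws f ∧ ∀ v, f v = 0 → ∃ u, G.Adj v u ∧ 0 < f u ∧ IsWDom G ws (move f u v)

/-- The weight of a function. -/
noncomputable def weight {V : Type*} [Fintype V] (f : V → ℕ) : ℕ := ∑ v, f v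

/-- The `w`-domination number. -/
noncomputable def wDomNum {V : Type*} [Fintype V] (G : SimpleGraph V) (ws : List ℕ) : ℕ :=
  sInf {k | ∃ f, IsWDom G ws f ∧ weight f = k}

/-- The secure `w`-domination number. -/
noncomputable def secWDomNum {V : Type*} [Fintype V] (G : SimpleGraph V) (ws : List ℕ) : ℕ :=
  sInf {k | ∃ f, IsSecureWDom G ws f ∧ weight f = k}

/-- The (ordinary) domination number, as `γ_{(1,0)}`. -/
noncomputable def domNum {V : Type*} [Fintype V] (G : SimpleGraph V) : ℕ :=
  wDomNum G [1, 0]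

/-- `G` has no isolated vertex. -/
def NoIsolated {V : Type*} (G : SimpleGraph V) : Prop := ∀ v, ∃ u, G.Adj v u

end SecureW

namespace SecureWAux

set_option linter.unusedSectionVars false

open SecureW Finset
open scoped Classical

variable {α β : Type*} [Fintype α] [Fintype β] {G : SimpleGraph α} {H : SimpleGraph β}

/-- Domination predicate specialised to `w = (1,0)`. -/
def Dm (G : SimpleGraph α) (H : SimpleGraph β) (f : α × β → ℕ) : Prop :=
  ∀ v, f v = 0 → ∃ w, (lexProd G H).Adj v w ∧ 0 < f w

open scoped Classical in
/-- Secure domination predicate specialised to `w = (1,0)`. -/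
def Sec (G : SimpleGraph α) (H : SimpleGraph β) (f : α × β → ℕ) : Prop :=
  (∀ v, f v ≤ 1) ∧ Dm G H f ∧
    ∀ v, f v = 0 → ∃ w, (lexProd G H).Adj v w ∧ 0 < f w ∧ Dm G H (move f w v)

lemma isWDom_iff (f : α × β → ℕ) :
    IsWDom (lexProd G H) [1, 0] f ↔ (∀ v, f v ≤ 1) ∧ Dm G H f := by
  constructor
  · rintro ⟨h1, h2⟩
    refine ⟨fun v => by have := h1 v; simp at this; omega, fun v hv => ?_⟩
    have h2v := h2 v
    rw [hv] at h2v
    simp only [List.getD_cons_zero] at h2v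
    by_contra hcon
    push_neg at hcon
    have : nbrSum (lexProd G H) f v = 0 := by
      unfold nbrSum
      refine Finset.sum_eq_zero ?_
      intro w hw
      rw [Finset.mem_filter] at hw
      have := hcon w hw.2
      omega
    omega
  · rintro ⟨h1, h2⟩
    constructor
    · intro v; have := h1 v; simp; omega
    · intro v
      have hv01 : f v = 0 ∨ f v = 1 := by have := h1 v; omega
      rcases hv01 with h0 | h0 <;> rw [h0]
      · simp only [List.getD_cons_zero]
        obtain ⟨w, hadj, hpos⟩ := h2 v h0
        calc 1 ≤ f w := hpos
        _ ≤ nbrSum (lexProd G H) f v := by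
            unfold nbrSum
            exact Finset.single_le_sum (fun i _ => Nat.zero_le _)
              (Finset.mem_filter.2 ⟨Finset.mem_univ _, hadj⟩)
      · simp

lemma move_irrel {V : Type*} (i1 i2 : DecidableEq V) (f : V → ℕ) (u v : V) :
    @move V i1 f u v = @move V i2 f u v := by
  funext x
  unfold move
  by_cases h1 : x = v
  · rw [if_pos h1, if_pos h1]
  · rw [if_neg h1, if_neg h1]
    by_cases h2 : x = u
    · rw [if_pos h2, if_pos h2]
    · rw [if_neg h2, if_neg h2]

lemma move_bnd {f : α × β → ℕ} (hb : ∀ v, f v ≤ 1) (w v p : α × β) : move f w v p ≤ 1 := by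
  unfold move
  split_ifs with h1 h2
  · omega
  · have := hb w; omega
  · exact hb p

lemma isSec_iff (f : α × β → ℕ) :
    IsSecureWDom (lexProd G H) [1, 0] f ↔ Sec G H f := by
  unfold IsSecureWDom Sec
  rw [isWDom_iff]
  constructor
  · rintro ⟨⟨h1, h2⟩, h3⟩
    refine ⟨h1, h2, fun v hv => ?_⟩
    obtain ⟨w, ha, hp, hw⟩ := h3 v hv
    refine ⟨w, ha, hp, ?_⟩
    have := ((isWDom_iff _).1 hw).2
    rwa [move_irrel _ (fun a b => instDecidableEqProd a b)] at this
  · rintro ⟨h1, h2, h3⟩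
    refine ⟨⟨h1, h2⟩, fun v hv => ?_⟩
    obtain ⟨w, ha, hp, hdm⟩ := h3 v hv
    refine ⟨w, ha, hp, (isWDom_iff _).2 ⟨fun p => ?_, ?_⟩⟩
    · rw [move_irrel _ (fun a b => instDecidableEqProd a b)]
      exact move_bnd h1 w v p
    · rwa [move_irrel _ (fun a b => instDecidableEqProd a b)]


section SumHelpers

variable {γ : Type*} [Fintype γ]

lemma exists_pos_of_sum_pos (F : γ → ℕ) (h : 0 < ∑ y, F y) : ∃ w, 0 < F w := by
  by_contra hcon
  push_neg at hcon
  have : ∑ y, F y = 0 := Finset.sum_eq_zero (fun y _ => by have := hcon y; omega)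
  omega

lemma exists_ne_pos (F : γ → ℕ) (hF : ∀ y, F y ≤ 1) (h : 2 ≤ ∑ y, F y) (z : γ) :
    ∃ w, w ≠ z ∧ 0 < F w := by
  by_contra hcon
  push_neg at hcon
  have hle : ∑ y, F y ≤ ∑ y, (if y = z then 1 else 0) := by
    refine Finset.sum_le_sum fun y _ => ?_
    have hb := hF y
    by_cases hy : y = z
    · rw [if_pos hy]; omega
    · rw [if_neg hy]; have := hcon y hy; omega
  rw [Finset.sum_ite_eq' Finset.univ z (fun _ => 1), if_pos (Finset.mem_univ z)] at hle
  omega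

lemma exists_ne_ne_pos (F : γ → ℕ) (hF : ∀ y, F y ≤ 1) (h : 3 ≤ ∑ y, F y) (z1 z2 : γ) :
    ∃ w, w ≠ z1 ∧ w ≠ z2 ∧ 0 < F w := by
  by_contra hcon
  push_neg at hcon
  have hle : ∑ y, F y ≤ ∑ y, ((if y = z1 then 1 else 0) + (if y = z2 then 1 else 0)) := by
    refine Finset.sum_le_sum fun y _ => ?_
    have hb := hF y
    by_cases hy1 : y = z1
    · rw [if_pos hy1]
      by_cases hy2 : y = z2
      · rw [if_pos hy2]; omega
      · rw [if_neg hy2]; omega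
    · rw [if_neg hy1]
      by_cases hy2 : y = z2
      · rw [if_pos hy2]; omega
      · rw [if_neg hy2]; have := hcon y hy1 hy2; omega
  rw [Finset.sum_add_distrib, Finset.sum_ite_eq' Finset.univ z1 (fun _ => 1),
    Finset.sum_ite_eq' Finset.univ z2 (fun _ => 1), if_pos (Finset.mem_univ z1),
    if_pos (Finset.mem_univ z2)] at hle
  omega

lemma exists_zero_of_sum_le (F : γ → ℕ) (h : ∑ y, F y ≤ 1) (hcard : Nontrivial γ) :
    ∃ c, F c = 0 := by
  by_contra hcon
  push_neg at hcon
  have h2 : 2 ≤ Fintype.card γ := Fintype.one_lt_card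
  have hcard_le := Finset.card_nsmul_le_sum Finset.univ F 1 (fun y _ => by have := hcon y; omega)
  rw [Finset.card_univ, smul_eq_mul, mul_one] at hcard_le
  have heta : Finset.univ.sum F = ∑ y, F y := rfl
  omega

end SumHelpers


/-- Copy sum. -/
noncomputable def CS (f : α × β → ℕ) (u : α) : ℕ := ∑ y, f (u, y)

lemma pair_ne_left {a c : α} (h : a ≠ c) (b d : β) : ((a, b) : α × β) ≠ (c, d) :=
  fun he => h (congrArg Prod.fst he)

lemma pair_ne_right {b d : β} (h : b ≠ d) (a c : α) : ((a, b) : α × β) ≠ (c, d) :=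
  fun he => h (congrArg Prod.snd he)

lemma adjL {a c : α} (h : G.Adj a c) (b d : β) : (lexProd G H).Adj (a, b) (c, d) := Or.inl h

lemma adj_fst {p t : α × β} (h : (lexProd G H).Adj p t) (hne : p.1 ≠ t.1) : G.Adj p.1 t.1 := by
  rcases h with h | ⟨h, _⟩
  · exact h
  · exact absurd h hne

section MoveLemmas

variable {V : Type*} [DecidableEq V]

lemma move_tgt (f : V → ℕ) (w v : V) : move f w v v = 1 := by simp [move]

lemma move_src (f : V → ℕ) {w v : V} (h : w ≠ v) : move f w v w = f w - 1 := by
  simp [move, h]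

lemma move_of_ne (f : V → ℕ) {p w v : V} (h1 : p ≠ v) (h2 : p ≠ w) : move f w v p = f p := by
  simp [move, h1, h2]

end MoveLemmas

/-- T2 transformation: if every neighbour copy of a heavy copy `u` carries at least 2,
one unit can be removed from copy `u`. -/
lemma step2 {f : α × β → ℕ} (hb : ∀ v, f v ≤ 1) (hd : Dm G H f)
    (hs : ∀ v, f v = 0 → ∃ w, (lexProd G H).Adj v w ∧ 0 < f w ∧ Dm G H (move f w v))
    {u x : α} {q : β} (hux : G.Adj u x) (hq : f (u, q) = 1) (h3 : 3 ≤ CS f u)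
    (hall : ∀ x', G.Adj u x' → 2 ≤ CS f x') :
    ∃ g : α × β → ℕ, (∀ v, g v ≤ 1) ∧ Dm G H g ∧
      (∀ v, g v = 0 → ∃ w, (lexProd G H).Adj v w ∧ 0 < g w ∧ Dm G H (move g w v)) ∧
      weight g + 1 = weight f ∧ (∀ t, t ≠ u → CS g t = CS f t) ∧ CS g u + 1 = CS f u := by
  classical
  have hxu : x ≠ u := fun h => G.irrefl (h ▸ hux)
  set g : α × β → ℕ := fun p => if p = (u, q) then 0 else f p with hgdef
  have hgo : ∀ p, p ≠ (u, q) → g p = f p := fun p hp => by simp [hgdef, hp]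
  have hgb : ∀ v, g v ≤ 1 := by
    intro v
    by_cases hv : v = (u, q)
    · simp [hgdef, hv]
    · rw [hgo v hv]; exact hb v
  have sur_u : ∀ z1 z2 : β, ∃ y, y ≠ z1 ∧ y ≠ z2 ∧ 0 < f (u, y) :=
    fun z1 z2 => exists_ne_ne_pos (fun y => f (u, y)) (fun y => hb _) h3 z1 z2
  have sur_x : ∀ x', G.Adj u x' → ∀ z : β, ∃ w, w ≠ z ∧ 0 < f (x', w) :=
    fun x' hx' z => exists_ne_pos (fun y => f (x', y)) (fun y => hb _) (hall x' hx') z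
  obtain ⟨w1, hw1⟩ : ∃ w, 0 < f (x, w) := by
    refine exists_pos_of_sum_pos (fun y => f (x, y)) ?_
    have h2 := hall x hux
    unfold CS at h2
    exact lt_of_lt_of_le (by norm_num) h2
  -- domination of g
  have hdg : Dm G H g := by
    rintro ⟨p1, py⟩ hp
    by_cases hp1 : p1 = u
    · subst hp1
      exact ⟨(x, w1), adjL hux _ _, by rw [hgo _ (pair_ne_left hxu _ _)]; exact hw1⟩
    · have hfp : f (p1, py) = 0 := by rw [← hgo _ (pair_ne_left hp1 _ _)]; exact hp
      obtain ⟨t', hadj', hpos'⟩ := hd _ hfp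
      by_cases ht'q : t' = (u, q)
      · have hpu : G.Adj p1 u := adj_fst (ht'q ▸ hadj') hp1
        obtain ⟨y0, hy0q, _, hy0⟩ := sur_u q q
        exact ⟨(u, y0), adjL hpu _ _, by rw [hgo _ (pair_ne_right hy0q _ _)]; exact hy0⟩
      · exact ⟨t', hadj', by rw [hgo _ ht'q]; exact hpos'⟩
  -- security of g
  have hsg : ∀ v, g v = 0 → ∃ w, (lexProd G H).Adj v w ∧ 0 < g w ∧ Dm G H (move g w v) := by
    rintro ⟨v1, vz⟩ hv
    by_cases hv1 : v1 = u
    · subst hv1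
      refine ⟨(x, w1), adjL hux _ _, by rw [hgo _ (pair_ne_left hxu _ _)]; exact hw1, ?_⟩
      rintro ⟨p1, py⟩ hp
      by_cases hp1 : p1 = v1
      · obtain ⟨w', hw'ne, hw'⟩ := sur_x x hux w1
        refine ⟨(x, w'), by rw [hp1]; exact adjL hux _ _, ?_⟩
        rw [move_of_ne g (pair_ne_left hxu _ _) (pair_ne_right hw'ne _ _),
          hgo _ (pair_ne_left hxu _ _)]
        exact hw'
      · by_cases hpx : ((p1, py) : α × β) = (x, w1)
        · refine ⟨(v1, vz), ?_, by rw [move_tgt]; omega⟩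
          rw [hpx]; exact adjL hux.symm _ _
        · have hfp : f (p1, py) = 0 := by
            rw [move_of_ne g (pair_ne_left hp1 _ _) hpx] at hp
            rw [← hgo _ (pair_ne_left hp1 _ _)]; exact hp
          obtain ⟨t', hadj', hpos'⟩ := hd _ hfp
          by_cases ht'q : t' = (v1, q)
          · have hpu : G.Adj p1 v1 := adj_fst (ht'q ▸ hadj') hp1
            exact ⟨(v1, vz), adjL hpu _ _, by rw [move_tgt]; omega⟩
          · by_cases ht'x : t' = (x, w1)
            · have hadjx := ht'x ▸ hadj'
              rcases hadjx with hGadj | ⟨heq, _⟩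
              · obtain ⟨w', hw'ne, hw'⟩ := sur_x x hux w1
                refine ⟨(x, w'), adjL hGadj _ _, ?_⟩
                rw [move_of_ne g (pair_ne_left hxu _ _) (pair_ne_right hw'ne _ _),
                  hgo _ (pair_ne_left hxu _ _)]
                exact hw'
              · refine ⟨(v1, vz), ?_, by rw [move_tgt]; omega⟩
                have heq' : p1 = x := heq
                have hax : G.Adj p1 v1 := by rw [heq']; exact hux.symm
                exact adjL hax _ _
            · by_cases ht'v : t' = ((v1, vz) : α × β)
              · exact ⟨t', hadj', by rw [ht'v, move_tgt]; omega⟩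
              · exact ⟨t', hadj',
                  by rw [move_of_ne g ht'v ht'x, hgo _ ht'q]; exact hpos'⟩
    · -- v1 ≠ u
      have hfv : f (v1, vz) = 0 := by rw [← hgo _ (pair_ne_left hv1 _ _)]; exact hv
      obtain ⟨t, hadj, htpos, hdm⟩ := hs _ hfv
      have htv : t ≠ (v1, vz) := fun he => by rw [he, hfv] at htpos; omega
      by_cases ht1 : t.1 = u
      · -- substitute mover (u, s)
        obtain ⟨s, hsq, _, hspos⟩ := sur_u q q
        have hGvu : G.Adj v1 u := by
          have h0 := adj_fst hadj (by rw [ht1]; exact hv1)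
          rwa [ht1] at h0
        refine ⟨(u, s), adjL hGvu _ _, by rw [hgo _ (pair_ne_right hsq _ _)]; exact hspos, ?_⟩
        rintro ⟨p1, py⟩ hp
        by_cases hp1 : p1 = u
        · subst hp1
          refine ⟨(x, w1), adjL hux _ _, ?_⟩
          have hne1 : ((x, w1) : α × β) ≠ (v1, vz) := fun he => by rw [he, hfv] at hw1; omega
          rw [move_of_ne g hne1 (pair_ne_left hxu _ _), hgo _ (pair_ne_left hxu _ _)]
          exact hw1
        · by_cases hpt : ((p1, py) : α × β) = (v1, vz)
          · rw [hpt, move_tgt] at hp; omega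
          · have hfp : f (p1, py) = 0 := by
              rw [move_of_ne g hpt (pair_ne_left hp1 _ _)] at hp
              rw [← hgo _ (pair_ne_left hp1 _ _)]; exact hp
            obtain ⟨t', hadj', hpos'⟩ := hd _ hfp
            by_cases ht'1 : t'.1 = u
            · have hpu : G.Adj p1 u := by
                have h0 := adj_fst hadj' (by rw [ht'1]; exact hp1)
                rwa [ht'1] at h0
              obtain ⟨y0, hy0q, hy0s, hy0⟩ := sur_u q s
              refine ⟨(u, y0), adjL hpu _ _, ?_⟩
              have hne1 : ((u, y0) : α × β) ≠ (v1, vz) := pair_ne_left (fun h => hv1 h.symm) _ _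
              rw [move_of_ne g hne1 (pair_ne_right hy0s _ _), hgo _ (pair_ne_right hy0q _ _)]
              exact hy0
            · refine ⟨t', hadj', ?_⟩
              have hne1 : t' ≠ ((v1, vz) : α × β) := fun he => by rw [he, hfv] at hpos'; omega
              have hne2 : t' ≠ ((u, s) : α × β) := fun he => ht'1 (by rw [he])
              have hne3 : t' ≠ ((u, q) : α × β) := fun he => ht'1 (by rw [he])
              rw [move_of_ne g hne1 hne2, hgo _ hne3]; exact hpos'
      · -- keep mover t
        have htq : t ≠ ((u, q) : α × β) := fun he => ht1 (by rw [he])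
        refine ⟨t, hadj, by rw [hgo _ htq]; exact htpos, ?_⟩
        have key : ∀ p : α × β, p ≠ (u, q) →
            move g t (v1, vz) p = move f t (v1, vz) p := by
          intro p hpq
          by_cases h1 : p = ((v1, vz) : α × β)
          · rw [h1, move_tgt, move_tgt]
          · by_cases h2 : p = t
            · subst h2; rw [move_src g htv, move_src f htv, hgo _ hpq]
            · rw [move_of_ne g h1 h2, move_of_ne f h1 h2, hgo _ hpq]
        rintro ⟨p1, py⟩ hp
        by_cases hp1 : p1 = u
        · subst hp1
          obtain ⟨w', hw'ne, hw'⟩ := sur_x x hux t.2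
          refine ⟨(x, w'), adjL hux _ _, ?_⟩
          have hne1 : ((x, w') : α × β) ≠ (v1, vz) := fun he => by rw [he, hfv] at hw'; omega
          have hne2 : ((x, w') : α × β) ≠ t := fun he => hw'ne (congrArg Prod.snd he)
          rw [move_of_ne g hne1 hne2, hgo _ (pair_ne_left hxu _ _)]
          exact hw'
        · have hpq : ((p1, py) : α × β) ≠ (u, q) := pair_ne_left hp1 _ _
          have hmfp : move f t (v1, vz) (p1, py) = 0 := by rw [← key _ hpq]; exact hp
          obtain ⟨t', hadj', hpos'⟩ := hdm _ hmfp
          by_cases ht'q : t' = ((u, q) : α × β)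
          · have hpu : G.Adj p1 u := adj_fst (ht'q ▸ hadj') hp1
            obtain ⟨y0, hy0q, _, hy0⟩ := sur_u q q
            refine ⟨(u, y0), adjL hpu _ _, ?_⟩
            have hne1 : ((u, y0) : α × β) ≠ (v1, vz) := pair_ne_left (fun h => hv1 h.symm) _ _
            have hne2 : ((u, y0) : α × β) ≠ t := fun he => ht1 ((congrArg Prod.fst he).symm)
            rw [move_of_ne g hne1 hne2, hgo _ (pair_ne_right hy0q _ _)]
            exact hy0
          · exact ⟨t', hadj', by rw [key _ ht'q]; exact hpos'⟩
  -- weight and copy sums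
  have hpt : ∀ p : α × β, f p = g p + (if p = (u, q) then 1 else 0) := by
    intro p
    by_cases hp : p = ((u, q) : α × β)
    · rw [hp, if_pos rfl, hq]; simp [hgdef]
    · rw [hgo _ hp, if_neg hp]; omega
  have hwt : weight g + 1 = weight f := by
    unfold weight
    rw [Finset.sum_congr rfl (fun p _ => hpt p), Finset.sum_add_distrib,
      Finset.sum_ite_eq' Finset.univ ((u, q) : α × β) (fun _ => 1),
      if_pos (Finset.mem_univ _)]
  have hCSt : ∀ t, t ≠ u → CS g t = CS f t := by
    intro t ht
    unfold CS
    exact Finset.sum_congr rfl fun y _ => (hgo _ (pair_ne_left ht _ _))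
  have hCSu : CS g u + 1 = CS f u := by
    unfold CS
    have hy : ∀ y : β, f (u, y) = g (u, y) + (if y = q then 1 else 0) := by
      intro y
      rw [hpt (u, y)]
      congr 1
      by_cases hyq : y = q
      · rw [if_pos hyq, if_pos (by rw [hyq])]
      · rw [if_neg hyq, if_neg (pair_ne_right hyq _ _)]
    rw [Finset.sum_congr rfl (fun y _ => hy y), Finset.sum_add_distrib,
      Finset.sum_ite_eq' Finset.univ q (fun _ => 1), if_pos (Finset.mem_univ _)]
  exact ⟨g, hgb, hdg, hsg, hwt, hCSt, hCSu⟩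


/-- T1 transformation: move one unit from a heavy copy `u` to an empty position of a
neighbour copy `x`. -/
lemma step1 {f : α × β → ℕ} (hb : ∀ v, f v ≤ 1) (hd : Dm G H f)
    (hs : ∀ v, f v = 0 → ∃ w, (lexProd G H).Adj v w ∧ 0 < f w ∧ Dm G H (move f w v))
    {u x : α} {q c : β} (hux : G.Adj u x) (hq : f (u, q) = 1) (hc : f (x, c) = 0)
    (h3 : 3 ≤ CS f u) :
    ∃ g : α × β → ℕ, (∀ v, g v ≤ 1) ∧ Dm G H g ∧
      (∀ v, g v = 0 → ∃ w, (lexProd G H).Adj v w ∧ 0 < g w ∧ Dm G H (move g w v)) ∧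
      weight g = weight f ∧ (∀ t, t ≠ u → t ≠ x → CS g t = CS f t) ∧
      CS g u + 1 = CS f u ∧ CS g x = CS f x + 1 := by
  classical
  have hxu : x ≠ u := fun h => G.irrefl (h ▸ hux)
  have huxne : u ≠ x := fun h => hxu h.symm
  set g : α × β → ℕ := fun p => if p = (u, q) then 0 else if p = (x, c) then 1 else f p
    with hgdef
  have hgq : g (u, q) = 0 := by simp [hgdef]
  have hgc : g (x, c) = 1 := by
    have : ((x, c) : α × β) ≠ (u, q) := pair_ne_left hxu _ _
    simp [hgdef, this]
  have hgo : ∀ p, p ≠ (u, q) → p ≠ (x, c) → g p = f p := fun p h1 h2 => by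
    simp [hgdef, h1, h2]
  have hgb : ∀ v, g v ≤ 1 := by
    intro v
    by_cases h1 : v = (u, q)
    · rw [h1, hgq]; omega
    · by_cases h2 : v = (x, c)
      · rw [h2, hgc]
      · rw [hgo v h1 h2]; exact hb v
  have sur_u : ∀ z1 z2 : β, ∃ y, y ≠ z1 ∧ y ≠ z2 ∧ 0 < f (u, y) :=
    fun z1 z2 => exists_ne_ne_pos (fun y => f (u, y)) (fun y => hb _) h3 z1 z2
  -- domination
  have hdg : Dm G H g := by
    rintro ⟨p1, py⟩ hp
    by_cases hp1 : p1 = u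
    · exact ⟨(x, c), by rw [hp1]; exact adjL hux _ _, by rw [hgc]; omega⟩
    · by_cases hpc : ((p1, py) : α × β) = (x, c)
      · rw [hpc, hgc] at hp; omega
      · have hfp : f (p1, py) = 0 := by
          rw [← hgo _ (pair_ne_left hp1 _ _) hpc]; exact hp
        obtain ⟨t', hadj', hpos'⟩ := hd _ hfp
        by_cases ht'q : t' = (u, q)
        · have hpu : G.Adj p1 u := adj_fst (ht'q ▸ hadj') hp1
          obtain ⟨y0, hy0q, _, hy0⟩ := sur_u q q
          refine ⟨(u, y0), adjL hpu _ _, ?_⟩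
          rw [hgo _ (pair_ne_right hy0q _ _) (pair_ne_left huxne _ _)]
          exact hy0
        · have ht'c : t' ≠ ((x, c) : α × β) := fun he => by rw [he, hc] at hpos'; omega
          exact ⟨t', hadj', by rw [hgo _ ht'q ht'c]; exact hpos'⟩
  -- security
  have hsg : ∀ v, g v = 0 → ∃ w, (lexProd G H).Adj v w ∧ 0 < g w ∧ Dm G H (move g w v) := by
    rintro ⟨v1, vz⟩ hv
    by_cases hv1 : v1 = u
    · subst hv1
      -- now `v1` plays the role of `u`
      by_cases hvq : vz = q
      · -- the deleted vertex: moving (x,c) back restores f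
        refine ⟨(x, c), adjL hux _ _, by rw [hgc]; omega, ?_⟩
        have hmv : move g (x, c) (v1, vz) = f := by
          funext p
          by_cases h1 : p = ((v1, vz) : α × β)
          · rw [h1, move_tgt, hvq]; exact hq.symm
          · by_cases h2 : p = ((x, c) : α × β)
            · rw [h2, move_src g (pair_ne_left hxu _ _), hgc, hc]
            · have h1' : p ≠ ((v1, q) : α × β) := by rw [← hvq]; exact h1
              rw [move_of_ne g h1 h2, hgo p h1' h2]
        rw [hmv]; exact hd
      · -- other zero in the heavy copy
        have hfv : f (v1, vz) = 0 := by
          rw [← hgo _ (pair_ne_right hvq _ _) (pair_ne_left huxne _ _)]; exact hv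
        obtain ⟨t, hadj, htpos, hdm⟩ := hs _ hfv
        have htv : t ≠ ((v1, vz) : α × β) := fun he => by rw [he, hfv] at htpos; omega
        have htc : t ≠ ((x, c) : α × β) := fun he => by rw [he, hc] at htpos; omega
        by_cases htq : t = ((v1, q) : α × β)
        · -- forced mover through the deleted vertex: use (x,c), get exactly move f
          refine ⟨(x, c), adjL hux _ _, by rw [hgc]; omega, ?_⟩
          have hmv : move g (x, c) (v1, vz) = move f t (v1, vz) := by
            funext p
            by_cases h1 : p = ((v1, vz) : α × β)
            · rw [h1, move_tgt, move_tgt]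
            · by_cases h2 : p = ((x, c) : α × β)
              · rw [h2, move_src g (pair_ne_left hxu _ _), hgc,
                  move_of_ne f (pair_ne_left hxu _ _) (fun he => htc (by rw [← he])), hc]
              · by_cases h3' : p = t
                · have hL : move g (x, c) (v1, vz) p = 0 := by
                    rw [move_of_ne g h1 h2, h3', htq, hgq]
                  have hR : move f t (v1, vz) p = 0 := by
                    rw [h3', move_src f htv, htq, hq]
                  rw [hL, hR]
                · have h1' : p ≠ ((v1, q) : α × β) := by rw [← htq]; exact h3'
                  rw [move_of_ne g h1 h2, move_of_ne f h1 h3', hgo p h1' h2]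
          rw [hmv]; exact hdm
        · -- keep the mover
          refine ⟨t, hadj, by rw [hgo _ htq htc]; exact htpos, ?_⟩
          have key : ∀ p : α × β, p ≠ (v1, q) → p ≠ (x, c) →
              move g t (v1, vz) p = move f t (v1, vz) p := by
            intro p h1 h2
            by_cases ha : p = ((v1, vz) : α × β)
            · rw [ha, move_tgt, move_tgt]
            · by_cases hb' : p = t
              · rw [hb', move_src g htv, move_src f htv, hgo t (hb' ▸ h1) (hb' ▸ h2)]
              · rw [move_of_ne g ha hb', move_of_ne f ha hb', hgo p h1 h2]
          have hmc : move g t (v1, vz) (x, c) = 1 := by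
            rw [move_of_ne g (pair_ne_left hxu _ _) (Ne.symm htc), hgc]
          rintro ⟨p1, py⟩ hp
          by_cases hp1 : p1 = v1
          · exact ⟨(x, c), by rw [hp1]; exact adjL hux _ _, by rw [hmc]; omega⟩
          · by_cases hpc : ((p1, py) : α × β) = (x, c)
            · rw [hpc, hmc] at hp; omega
            · have hmfp : move f t (v1, vz) (p1, py) = 0 := by
                rw [← key _ (pair_ne_left hp1 _ _) hpc]; exact hp
              obtain ⟨t', hadj', hpos'⟩ := hdm _ hmfp
              by_cases ht'q : t' = ((v1, q) : α × β)
              · have hpu : G.Adj p1 v1 := adj_fst (ht'q ▸ hadj') hp1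
                exact ⟨(v1, vz), adjL hpu _ _, by rw [move_tgt]; omega⟩
              · by_cases ht'c : t' = ((x, c) : α × β)
                · exact ⟨t', hadj', by rw [ht'c, hmc]; omega⟩
                · exact ⟨t', hadj', by rw [key _ ht'q ht'c]; exact hpos'⟩
    · -- v outside the heavy copy
      have hvc : ((v1, vz) : α × β) ≠ (x, c) := fun he => by rw [he, hgc] at hv; omega
      have hfv : f (v1, vz) = 0 := by rw [← hgo _ (pair_ne_left hv1 _ _) hvc]; exact hv
      obtain ⟨t, hadj, htpos, hdm⟩ := hs _ hfv
      have htv : t ≠ ((v1, vz) : α × β) := fun he => by rw [he, hfv] at htpos; omega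
      have htc : t ≠ ((x, c) : α × β) := fun he => by rw [he, hc] at htpos; omega
      by_cases ht1 : t.1 = u
      · -- substitute a mover in the heavy copy
        obtain ⟨s, hsq, _, hspos⟩ := sur_u q q
        have hGvu : G.Adj v1 u := by
          have h0 := adj_fst hadj (by rw [ht1]; exact hv1)
          rwa [ht1] at h0
        refine ⟨(u, s), adjL hGvu _ _,
          by rw [hgo _ (pair_ne_right hsq _ _) (pair_ne_left huxne _ _)]; exact hspos, ?_⟩
        have hmc : move g (u, s) (v1, vz) (x, c) = 1 := by
          rw [move_of_ne g (Ne.symm hvc) (pair_ne_left hxu _ _), hgc]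
        rintro ⟨p1, py⟩ hp
        by_cases hp1 : p1 = u
        · exact ⟨(x, c), by rw [hp1]; exact adjL hux _ _, by rw [hmc]; omega⟩
        · by_cases hpt : ((p1, py) : α × β) = (v1, vz)
          · rw [hpt, move_tgt] at hp; omega
          · by_cases hpc : ((p1, py) : α × β) = (x, c)
            · rw [hpc, hmc] at hp; omega
            · have hfp : f (p1, py) = 0 := by
                rw [move_of_ne g hpt (pair_ne_left hp1 _ _)] at hp
                rw [← hgo _ (pair_ne_left hp1 _ _) hpc]; exact hp
              obtain ⟨t', hadj', hpos'⟩ := hd _ hfp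
              by_cases ht'1 : t'.1 = u
              · have hpu : G.Adj p1 u := by
                  have h0 := adj_fst hadj' (by rw [ht'1]; exact hp1)
                  rwa [ht'1] at h0
                obtain ⟨y0, hy0q, hy0s, hy0⟩ := sur_u q s
                refine ⟨(u, y0), adjL hpu _ _, ?_⟩
                have hne1 : ((u, y0) : α × β) ≠ (v1, vz) := pair_ne_left (fun h => hv1 h.symm) _ _
                rw [move_of_ne g hne1 (pair_ne_right hy0s _ _),
                  hgo _ (pair_ne_right hy0q _ _) (pair_ne_left huxne _ _)]
                exact hy0
              · refine ⟨t', hadj', ?_⟩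
                have hne1 : t' ≠ ((v1, vz) : α × β) := fun he => by rw [he, hfv] at hpos'; omega
                have hne2 : t' ≠ ((u, s) : α × β) := fun he => ht'1 (by rw [he])
                have hne3 : t' ≠ ((u, q) : α × β) := fun he => ht'1 (by rw [he])
                have hne4 : t' ≠ ((x, c) : α × β) := fun he => by rw [he, hc] at hpos'; omega
                rw [move_of_ne g hne1 hne2, hgo _ hne3 hne4]; exact hpos'
      · -- keep the mover
        have htq : t ≠ ((u, q) : α × β) := fun he => ht1 (by rw [he])
        refine ⟨t, hadj, by rw [hgo _ htq htc]; exact htpos, ?_⟩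
        have key : ∀ p : α × β, p ≠ (u, q) → p ≠ (x, c) →
            move g t (v1, vz) p = move f t (v1, vz) p := by
          intro p h1 h2
          by_cases ha : p = ((v1, vz) : α × β)
          · rw [ha, move_tgt, move_tgt]
          · by_cases hb' : p = t
            · rw [hb', move_src g htv, move_src f htv, hgo t (hb' ▸ h1) (hb' ▸ h2)]
            · rw [move_of_ne g ha hb', move_of_ne f ha hb', hgo p h1 h2]
        have hmc : move g t (v1, vz) (x, c) = 1 := by
          rw [move_of_ne g (Ne.symm hvc) (Ne.symm htc), hgc]
        rintro ⟨p1, py⟩ hp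
        by_cases hp1 : p1 = u
        · exact ⟨(x, c), by rw [hp1]; exact adjL hux _ _, by rw [hmc]; omega⟩
        · by_cases hpc : ((p1, py) : α × β) = (x, c)
          · rw [hpc, hmc] at hp; omega
          · have hmfp : move f t (v1, vz) (p1, py) = 0 := by
              rw [← key _ (pair_ne_left hp1 _ _) hpc]; exact hp
            obtain ⟨t', hadj', hpos'⟩ := hdm _ hmfp
            by_cases ht'q : t' = ((u, q) : α × β)
            · have hpu : G.Adj p1 u := adj_fst (ht'q ▸ hadj') hp1
              obtain ⟨y0, hy0q, _, hy0⟩ := sur_u q q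
              refine ⟨(u, y0), adjL hpu _ _, ?_⟩
              have hne1 : ((u, y0) : α × β) ≠ (v1, vz) := pair_ne_left (fun h => hv1 h.symm) _ _
              have hne2 : ((u, y0) : α × β) ≠ t := fun he => ht1 ((congrArg Prod.fst he).symm)
              rw [key _ (pair_ne_right hy0q _ _) (pair_ne_left huxne _ _),
                move_of_ne f hne1 hne2]
              exact hy0
            · by_cases ht'c : t' = ((x, c) : α × β)
              · exact ⟨t', hadj', by rw [ht'c, hmc]; omega⟩
              · exact ⟨t', hadj', by rw [key _ ht'q ht'c]; exact hpos'⟩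
  -- weight and copy sums
  have hpt : ∀ p : α × β,
      f p + (if p = (x, c) then 1 else 0) = g p + (if p = (u, q) then 1 else 0) := by
    intro p
    by_cases h1 : p = ((u, q) : α × β)
    · rw [h1, if_pos rfl, if_neg (pair_ne_left huxne _ _), hq, hgq]
    · by_cases h2 : p = ((x, c) : α × β)
      · rw [h2, if_pos rfl, if_neg (pair_ne_left hxu _ _), hc, hgc]
      · rw [if_neg h1, if_neg h2, hgo p h1 h2]
  have hwt : weight g = weight f := by
    have hsum := Finset.sum_congr rfl (fun p (_ : p ∈ Finset.univ) => hpt p)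
    rw [Finset.sum_add_distrib, Finset.sum_add_distrib,
      Finset.sum_ite_eq' Finset.univ ((u, q) : α × β) (fun _ => 1),
      Finset.sum_ite_eq' Finset.univ ((x, c) : α × β) (fun _ => 1),
      if_pos (Finset.mem_univ _), if_pos (Finset.mem_univ _)] at hsum
    unfold weight
    omega
  have hCSt : ∀ t, t ≠ u → t ≠ x → CS g t = CS f t := by
    intro t htu htx
    unfold CS
    exact Finset.sum_congr rfl fun y _ =>
      (hgo _ (pair_ne_left htu _ _) (pair_ne_left htx _ _))
  have hCSu : CS g u + 1 = CS f u := by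
    unfold CS
    have hy : ∀ y : β, f (u, y) = g (u, y) + (if y = q then 1 else 0) := by
      intro y
      have h0 := hpt (u, y)
      rw [if_neg (pair_ne_left huxne _ _)] at h0
      rw [Nat.add_zero] at h0
      rw [h0]
      congr 1
      by_cases hyq : y = q
      · rw [if_pos hyq, if_pos (by rw [hyq])]
      · rw [if_neg hyq, if_neg (pair_ne_right hyq _ _)]
    rw [Finset.sum_congr rfl (fun y _ => hy y), Finset.sum_add_distrib,
      Finset.sum_ite_eq' Finset.univ q (fun _ => 1), if_pos (Finset.mem_univ _)]
  have hCSx : CS g x = CS f x + 1 := by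
    unfold CS
    have hy : ∀ y : β, g (x, y) = f (x, y) + (if y = c then 1 else 0) := by
      intro y
      have h0 := hpt (x, y)
      rw [if_neg (pair_ne_left hxu _ _)] at h0
      rw [Nat.add_zero] at h0
      rw [← h0]
      congr 1
      by_cases hyc : y = c
      · rw [if_pos hyc, if_pos (by rw [hyc])]
      · rw [if_neg hyc, if_neg (pair_ne_right hyc _ _)]
    rw [Finset.sum_congr rfl (fun y _ => hy y), Finset.sum_add_distrib,
      Finset.sum_ite_eq' Finset.univ c (fun _ => 1), if_pos (Finset.mem_univ _)]
  exact ⟨g, hgb, hdg, hsg, hwt, hCSt, hCSu, hCSx⟩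


/-- Badness measure. -/
noncomputable def Mu (f : α × β → ℕ) : ℕ := ∑ u, (CS f u - 2)

lemma reduce (hG : NoIsolated G) (hH : Nontrivial β) {f : α × β → ℕ}
    (hb : ∀ v, f v ≤ 1) (hd : Dm G H f)
    (hs : ∀ v, f v = 0 → ∃ w, (lexProd G H).Adj v w ∧ 0 < f w ∧ Dm G H (move f w v))
    {u : α} (h3 : 3 ≤ CS f u) :
    ∃ g : α × β → ℕ, (∀ v, g v ≤ 1) ∧ Dm G H g ∧
      (∀ v, g v = 0 → ∃ w, (lexProd G H).Adj v w ∧ 0 < g w ∧ Dm G H (move g w v)) ∧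
      weight g ≤ weight f ∧ Mu g < Mu f := by
  obtain ⟨x, hux⟩ := hG u
  obtain ⟨q, hqpos⟩ : ∃ q, 0 < f (u, q) :=
    exists_pos_of_sum_pos (fun y => f (u, y)) (lt_of_lt_of_le (by norm_num) h3)
  have hq : f (u, q) = 1 := by have := hb (u, q); omega
  by_cases hcase : ∀ x', G.Adj u x' → 2 ≤ CS f x'
  · obtain ⟨g, hgb, hdg, hsg, hwt, hCSt, hCSu⟩ := step2 hb hd hs hux hq h3 hcase
    refine ⟨g, hgb, hdg, hsg, by omega, ?_⟩
    unfold Mu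
    refine Finset.sum_lt_sum (fun i _ => ?_) ⟨u, Finset.mem_univ u, by omega⟩
    by_cases hiu : i = u
    · subst hiu; omega
    · rw [hCSt i hiu]
  · push_neg at hcase
    obtain ⟨x', hux', hx'le⟩ := hcase
    have hx'u : x' ≠ u := fun h => G.irrefl (h ▸ hux')
    obtain ⟨c, hc⟩ : ∃ c, f (x', c) = 0 := by
      refine exists_zero_of_sum_le (fun y => f (x', y)) ?_ hH
      show CS f x' ≤ 1
      omega
    obtain ⟨g, hgb, hdg, hsg, hwt, hCSt, hCSu, hCSx⟩ := step1 hb hd hs hux' hq hc h3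
    refine ⟨g, hgb, hdg, hsg, le_of_eq hwt, ?_⟩
    unfold Mu
    refine Finset.sum_lt_sum (fun i _ => ?_) ⟨u, Finset.mem_univ u, by omega⟩
    by_cases hiu : i = u
    · subst hiu; omega
    · by_cases hix : i = x'
      · subst hix; omega
      · rw [hCSt i hiu hix]

lemma exists_good (hG : NoIsolated G) (hH : Nontrivial β) :
    ∀ n (f : α × β → ℕ), (∀ v, f v ≤ 1) → Dm G H f →
      (∀ v, f v = 0 → ∃ w, (lexProd G H).Adj v w ∧ 0 < f w ∧ Dm G H (move f w v)) →
      Mu f ≤ n →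
      ∃ g : α × β → ℕ, (∀ v, g v ≤ 1) ∧ Dm G H g ∧
        (∀ v, g v = 0 → ∃ w, (lexProd G H).Adj v w ∧ 0 < g w ∧ Dm G H (move g w v)) ∧
        weight g ≤ weight f ∧ ∀ t, CS g t ≤ 2 := by
  intro n
  induction n with
  | zero =>
    intro f hb hd hs hmu
    refine ⟨f, hb, hd, hs, le_rfl, fun t => ?_⟩
    have h0 : Mu f = 0 := by omega
    have := (Finset.sum_eq_zero_iff).1 h0 t (Finset.mem_univ t)
    omega
  | succ n ih =>
    intro f hb hd hs hmu
    by_cases hgood : ∀ t, CS f t ≤ 2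
    · exact ⟨f, hb, hd, hs, le_rfl, hgood⟩
    · push_neg at hgood
      obtain ⟨u, hu⟩ := hgood
      have h3 : 3 ≤ CS f u := hu
      obtain ⟨g, hgb, hdg, hsg, hwle, hmult⟩ := reduce hG hH hb hd hs h3
      obtain ⟨g', hgb', hdg', hsg', hwle', hCS'⟩ := ih g hgb hdg hsg (by omega)
      exact ⟨g', hgb', hdg', hsg', hwle'.trans hwle, hCS'⟩

end SecureWAux

open SecureW in
theorem stmt_0 {α β : Type*} [Fintype α] [Fintype β]
    (G : SimpleGraph α) (H : SimpleGraph β)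
    (hG : NoIsolated G) (hH : Nontrivial β) :
    ∃ f : α × β → ℕ, IsSecureWDom (lexProd G H) [1, 0] f ∧
      weight f = secWDomNum (lexProd G H) [1, 0] ∧
      ∀ u : α, (∑ y : β, f (u, y)) ≤ 2 := by
  classical
  have hne : {k | ∃ f, IsSecureWDom (lexProd G H) [1, 0] f ∧ weight f = k}.Nonempty := by
    refine ⟨weight (fun _ : α × β => 1), fun _ => 1, ?_, rfl⟩
    refine (SecureWAux.isSec_iff _).2 ⟨fun v => le_rfl, ?_, ?_⟩
    · intro v hv; simp at hv
    · intro v hv; simp at hv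
  obtain ⟨f0, hf0, hw0⟩ := Nat.sInf_mem hne
  obtain ⟨hb, hd, hs⟩ := (SecureWAux.isSec_iff f0).1 hf0
  obtain ⟨g, hgb, hdg, hsg, hwle, hCS⟩ :=
    SecureWAux.exists_good hG hH (SecureWAux.Mu f0) f0 hb hd hs le_rfl
  have hgsec : IsSecureWDom (lexProd G H) [1, 0] g :=
    (SecureWAux.isSec_iff g).2 ⟨hgb, hdg, hsg⟩
  refine ⟨g, hgsec, ?_, fun u => hCS u⟩
  have h1 : secWDomNum (lexProd G H) [1, 0] ≤ weight g := Nat.sInf_le ⟨g, hgsec, rfl⟩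
  have h2 : weight g ≤ secWDomNum (lexProd G H) [1, 0] := by
    calc weight g ≤ weight f0 := hwle
    _ = _ := hw0
  omega
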